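/- For every F ∈ L²_ν(X;Y) and ν-almost every a ∈ X, ∫_Θ ( ∫_X ⟨F(a'), φ(a',θ)⟩_Y dν(a') ) φ(a,θ) dμ(θ) = ∫_X ( ∫_Θ ⟨φ(a',θ), F(a')⟩_Y φ(a,θ) dμ(θ) ) dν(a'), where all integrals are well-defined Bochner integrals. In other words, A A* F = T_{k_μ} F, so the operator A is a square root of the kernel integral operator T_{k_μ}. -/

import Mathlib

open MeasureTheory
open scoped ENNReal InnerProductSpace

/-- For every `F ∈ L²_ν(X;Y)` and ν-almost every `a ∈ X`,
`∫_Θ (∫_X ⟨F(a'), φ(a',θ)⟩ dν(a')) φ(a,θ) dμ(θ)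
  = ∫_X (∫_Θ ⟨φ(a',θ), F(a')⟩ φ(a,θ) dμ(θ)) dν(a')`,
with all integrals well-defined Bochner integrals; i.e. `A A* F = T_{k_μ} F`,
so `A` is a square root of the kernel integral operator `T_{k_μ}`. -/
theorem statement2
    {X Θ Y : Type*} [MeasurableSpace X] [MeasurableSpace Θ]
    [NormedAddCommGroup Y] [InnerProductSpace ℝ Y]
    [CompleteSpace Y] [SecondCountableTopology Y]
    (ν : Measure X) (μ : Measure Θ)
    [IsProbabilityMeasure ν] [IsProbabilityMeasure μ]
    (φ : X × Θ → Y)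
    (hφ : MemLp φ 2 (ν.prod μ)) :
    ∀ F : X → Y, MemLp F 2 ν →
      ∀ᵐ a ∂ν,
        Integrable (fun θ => (∫ a', ⟪F a', φ (a', θ)⟫_ℝ ∂ν) • φ (a, θ)) μ ∧
        Integrable (fun a' => ∫ θ, ⟪φ (a', θ), F a'⟫_ℝ • φ (a, θ) ∂μ) ν ∧
        (∀ᵐ a' ∂ν, Integrable (fun θ => ⟪φ (a', θ), F a'⟫_ℝ • φ (a, θ)) μ) ∧
        ∫ θ, (∫ a', ⟪F a', φ (a', θ)⟫_ℝ ∂ν) • φ (a, θ) ∂μ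
          = ∫ a', (∫ θ, ⟪φ (a', θ), F a'⟫_ℝ • φ (a, θ) ∂μ) ∂ν := by
  intro F hF
  -- squared-norm integrability of φ on the product
  have hφsq : Integrable (fun p => ‖φ p‖ ^ 2) (ν.prod μ) :=
    (memLp_two_iff_integrable_sq_norm hφ.1).mp hφ
  have hFsq : Integrable (fun a' => ‖F a'‖ ^ 2) ν :=
    (memLp_two_iff_integrable_sq_norm hF.1).mp hF
  -- a.e. section of φ is in L²
  have hsecAESM := hφ.1.prodMk_left
  have hsecSq : ∀ᵐ a ∂ν, Integrable (fun θ => ‖φ (a, θ)‖ ^ 2) μ := hφsq.prod_right_ae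
  filter_upwards [hsecAESM, hsecSq] with a haM haSq
  have ha : MemLp (fun θ => φ (a, θ)) 2 μ :=
    (memLp_two_iff_integrable_sq_norm haM).mpr haSq
  -- h2 : (a', θ) ↦ ‖F a'‖ * ‖φ (a, θ)‖ is in L² of the product
  have h2M : AEStronglyMeasurable (fun p : X × Θ => ‖F p.1‖ * ‖φ (a, p.2)‖) (ν.prod μ) :=
    hF.1.norm.comp_fst.mul ha.1.norm.comp_snd
  have h2 : MemLp (fun p : X × Θ => ‖F p.1‖ * ‖φ (a, p.2)‖) 2 (ν.prod μ) := by
    rw [memLp_two_iff_integrable_sq h2M]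
    have := hFsq.mul_prod haSq
    simpa [mul_pow] using this
  -- the product bound is integrable
  have hb : Integrable (fun p : X × Θ => (‖F p.1‖ * ‖φ (a, p.2)‖) * ‖φ p‖) (ν.prod μ) := by
    rw [← memLp_one_iff_integrable]
    have := (hφ.norm).smul h2 (r := 1)
    simpa [Pi.smul_apply, smul_eq_mul, Pi.mul_def] using this
  -- key: the integrand is integrable on the product
  have gM : AEStronglyMeasurable
      (fun p : X × Θ => ⟪φ p, F p.1⟫_ℝ • φ (a, p.2)) (ν.prod μ) :=
    (hφ.1.inner hF.1.comp_fst).smul ha.1.comp_snd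
  have key : Integrable (fun p : X × Θ => ⟪φ p, F p.1⟫_ℝ • φ (a, p.2)) (ν.prod μ) := by
    refine hb.mono' gM (Filter.Eventually.of_forall fun p => ?_)
    rw [norm_smul, Real.norm_eq_abs]
    calc |⟪φ p, F p.1⟫_ℝ| * ‖φ (a, p.2)‖
        ≤ (‖φ p‖ * ‖F p.1‖) * ‖φ (a, p.2)‖ := by
          exact mul_le_mul_of_nonneg_right (abs_real_inner_le_norm _ _) (norm_nonneg _)
      _ = (‖F p.1‖ * ‖φ (a, p.2)‖) * ‖φ p‖ := by ring
  -- rewrite the first integrand as an integral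
  have hfun : (fun θ => (∫ a', ⟪F a', φ (a', θ)⟫_ℝ ∂ν) • φ (a, θ))
      = fun θ => ∫ a', ⟪φ (a', θ), F a'⟫_ℝ • φ (a, θ) ∂ν := by
    funext θ
    rw [integral_smul_const]
    congr 1
    exact integral_congr_ae (Filter.Eventually.of_forall fun a' => (real_inner_comm _ _))
  refine ⟨?_, ?_, ?_, ?_⟩
  · rw [hfun]
    exact key.integral_prod_right
  · exact key.integral_prod_left
  · exact key.prod_right_ae
  · rw [hfun]
    exact (integral_integral_swap key).symm
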